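/- arXiv:1611.07103 — 5 statements merged into one kernel-verified Lean document; each statement's English description precedes it below -/
import Mathlib

section
/- Let F and G be two continuous cumulative distribution functions on ℝ. If for every integer n ≥ 0 we have ∫_ℝ G(t) (F(t))^n dF(t) = 1/(n+2), then G(t) = F(t) for F-almost every t. -/
open MeasureTheory Filter Set

private lemma mono_nonneg {f : ℝ → ℝ} (hm : Monotone f) (h0 : Tendsto f atBot (nhds 0)) :
    ∀ t, 0 ≤ f t := fun t =>
  le_of_tendsto h0 ((eventually_le_atBot t).mono fun s hs => hm hs)

private lemma mono_le_one {f : ℝ → ℝ} (hm : Monotone f) (h1 : Tendsto f atTop (nhds 1)) :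
    ∀ t, f t ≤ 1 := fun t =>
  ge_of_tendsto h1 ((eventually_ge_atTop t).mono fun s hs => hm hs)

private lemma stieltjes_levelset (F : StieltjesFunction ℝ) (hFc : Continuous F)
    (hF0 : Tendsto F atBot (nhds 0)) (hF1 : Tendsto F atTop (nhds 1)) (x : ℝ) :
    F.measure {t | F t ≤ x} = ENNReal.ofReal (min x 1) := by
  have hle1 := mono_le_one F.mono hF1
  have hIic : ∀ a, F.measure (Iic a) = ENNReal.ofReal (F a) := fun a => by
    rw [F.measure_Iic hF0]; simp
  rcases le_or_gt 1 x with hx | hx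
  · have h : {t | F t ≤ x} = univ := eq_univ_of_forall fun t => le_trans (hle1 t) hx
    haveI := F.isProbabilityMeasure hF0 hF1
    rw [h, measure_univ, min_eq_right hx]
    simp
  · rw [min_eq_left hx.le]
    by_cases hne : {t | F t ≤ x}.Nonempty
    · obtain ⟨T, hT⟩ : ∃ T, x < F T := ((tendsto_order.1 hF1).1 x hx).exists
      have hbdd : BddAbove {t | F t ≤ x} := ⟨T, fun t ht => by
        by_contra h
        push_neg at h
        exact absurd (le_trans (F.mono h.le) ht) (not_le.2 hT)⟩
      have hclosed : IsClosed {t | F t ≤ x} := isClosed_le hFc continuous_const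
      set s := sSup {t | F t ≤ x} with hs_def
      have hs_mem : F s ≤ x := hclosed.csSup_mem hne hbdd
      have hset : {t | F t ≤ x} = Iic s :=
        subset_antisymm (fun t ht => le_csSup hbdd ht)
          (fun t ht => le_trans (F.mono ht) hs_mem)
      have hFs : F s = x := by
        refine le_antisymm hs_mem ?_
        have h1 : ∀ ε > (0:ℝ), x ≤ F (s + ε) := by
          intro ε hε
          by_contra h
          push_neg at h
          have := le_csSup hbdd (show s + ε ∈ {t | F t ≤ x} from h.le)
          linarith
        have h2 : Tendsto (fun ε : ℝ => F (s + ε)) (nhdsWithin 0 (Ioi 0)) (nhds (F s)) := by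
          have hadd : Tendsto (fun ε : ℝ => s + ε) (nhds 0) (nhds s) := by
            have := (continuous_add_left s).tendsto (0:ℝ); rwa [add_zero] at this
          exact (hFc.tendsto s).comp (hadd.mono_left nhdsWithin_le_nhds)
        exact ge_of_tendsto h2 (eventually_nhdsWithin_of_forall fun ε hε => h1 ε hε)
      rw [hset, hIic, hFs]
    · rw [not_nonempty_iff_eq_empty] at hne
      rw [hne, measure_empty]
      have hx0 : x ≤ 0 := by
        by_contra h
        push_neg at h
        obtain ⟨t, ht⟩ := ((tendsto_order.1 hF0).2 x h).exists
        exact absurd (eq_empty_iff_forall_notMem.1 hne t) (by simpa using ht.le)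
      simp [ENNReal.ofReal_eq_zero.2 hx0]

private lemma stieltjes_map_self (F : StieltjesFunction ℝ) (hFc : Continuous F)
    (hF0 : Tendsto F atBot (nhds 0)) (hF1 : Tendsto F atTop (nhds 1)) :
    Measure.map F F.measure = volume.restrict (Ioc 0 1) := by
  haveI := F.isProbabilityMeasure hF0 hF1
  haveI : IsProbabilityMeasure (Measure.map F F.measure) :=
    Measure.isProbabilityMeasure_map hFc.measurable.aemeasurable
  refine Measure.ext_of_Iic _ _ fun x => ?_
  rw [Measure.map_apply hFc.measurable measurableSet_Iic]
  have h1 : F ⁻¹' Iic x = {t | F t ≤ x} := rfl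
  rw [h1, stieltjes_levelset F hFc hF0 hF1 x, Measure.restrict_apply measurableSet_Iic]
  have h2 : Iic x ∩ Ioc 0 1 = Ioc 0 (min x 1) := by
    ext t
    simp only [mem_inter_iff, mem_Iic, mem_Ioc, le_min_iff]
    tauto
  rw [h2, Real.volume_Ioc, sub_zero]

private lemma stieltjes_pow_integral (F : StieltjesFunction ℝ) (hFc : Continuous F)
    (hF0 : Tendsto F atBot (nhds 0)) (hF1 : Tendsto F atTop (nhds 1)) (m : ℕ) :
    ∫ t, (F t) ^ m ∂F.measure = 1 / (m + 1) := by
  have h1 : ∫ t, (F t) ^ m ∂F.measure = ∫ x, x ^ m ∂(Measure.map F F.measure) :=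
    (integral_map hFc.measurable.aemeasurable
      (measurable_id.pow_const m).aestronglyMeasurable).symm
  rw [h1, stieltjes_map_self F hFc hF0 hF1]
  have h2 : ∫ x in Ioc (0:ℝ) 1, x ^ m = ∫ x in (0:ℝ)..1, x ^ m := by
    rw [intervalIntegral.integral_of_le zero_le_one]
  rw [h2, integral_pow]
  simp

/-- Let `F` and `G` be two continuous cumulative distribution functions on `ℝ`.
If for every integer `n ≥ 0` we have `∫ G(t) (F(t))^n dF(t) = 1/(n+2)`, then
`G(t) = F(t)` for `F`-almost every `t`. -/
theorem cdf_eq_of_moments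
    (F : StieltjesFunction ℝ) (hFc : Continuous F)
    (hF0 : Tendsto F atBot (nhds 0)) (hF1 : Tendsto F atTop (nhds 1))
    (G : ℝ → ℝ) (hGmono : Monotone G) (hGc : Continuous G)
    (hG0 : Tendsto G atBot (nhds 0)) (hG1 : Tendsto G atTop (nhds 1))
    (hmom : ∀ n : ℕ, ∫ t, G t * (F t) ^ n ∂F.measure = 1 / (n + 2)) :
    ∀ᵐ t ∂F.measure, G t = F t := by
  set μ := F.measure with hμ
  haveI := F.isProbabilityMeasure hF0 hF1
  have hF_nn := mono_nonneg F.mono hF0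
  have hF_le1 := mono_le_one F.mono hF1
  have hG_nn := mono_nonneg hGmono hG0
  have hG_le1 := mono_le_one hGmono hG1
  -- integrability of bounded continuous functions
  have hbdd_int : ∀ (f : ℝ → ℝ) (C : ℝ), Continuous f → (∀ t, ‖f t‖ ≤ C) → Integrable f μ :=
    fun f C hf hC =>
      Integrable.mono' (integrable_const C) hf.aestronglyMeasurable (Eventually.of_forall hC)
  have habs : ∀ t (n : ℕ) (g : ℝ → ℝ), (∀ u, 0 ≤ g u) → (∀ u, g u ≤ 1) →
      ‖g t * F t ^ n‖ ≤ 1 := by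
    intro t n g h0 h1
    rw [norm_mul, norm_pow]
    have h2 : ‖g t‖ ≤ 1 := by rw [Real.norm_eq_abs, abs_le]; constructor <;> nlinarith [h0 t, h1 t]
    have h3 : ‖F t‖ ≤ 1 := by rw [Real.norm_eq_abs, abs_le]; constructor <;> nlinarith [hF_nn t, hF_le1 t]
    calc ‖g t‖ * ‖F t‖ ^ n ≤ 1 * 1 ^ n := by
          exact mul_le_mul h2 (pow_le_pow_left₀ (norm_nonneg _) h3 n) (by positivity) zero_le_one
      _ = 1 := by simp
  have hGFn_int : ∀ n : ℕ, Integrable (fun t => G t * F t ^ n) μ := fun n =>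
    hbdd_int _ 1 (hGc.mul (hFc.pow n)) (fun t => habs t n G hG_nn hG_le1)
  have hFFn_int : ∀ n : ℕ, Integrable (fun t => F t * F t ^ n) μ := fun n =>
    hbdd_int _ 1 (hFc.mul (hFc.pow n)) (fun t => habs t n F hF_nn hF_le1)
  -- vanishing moments of G - F
  have hz : ∀ n : ℕ, ∫ t, (G t - F t) * F t ^ n ∂μ = 0 := by
    intro n
    have e : (fun t => (G t - F t) * F t ^ n)
        = fun t => G t * F t ^ n - F t * F t ^ n := by funext t; ring
    rw [e, integral_sub (hGFn_int n) (hFFn_int n), hmom n]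
    have e2 : ∫ t, F t * F t ^ n ∂μ = ∫ t, F t ^ (n + 1) ∂μ := by
      congr 1; funext t; ring
    rw [e2, stieltjes_pow_integral F hFc hF0 hF1 (n + 1)]
    push_cast
    ring
  have hGF_int : Integrable (fun t => G t - F t) μ := by
    have := (hGFn_int 0).sub (hFFn_int 0)
    exact this.congr (Eventually.of_forall fun t => by simp)
  have habs2 : ∀ t, |G t - F t| ≤ 1 := fun t =>
    abs_le.2 ⟨by linarith [hG_nn t, hF_le1 t], by linarith [hG_le1 t, hF_nn t]⟩
  have hpint : ∀ p : Polynomial ℝ, Integrable (fun t => (G t - F t) * p.eval (F t)) μ := by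
    intro p
    have e2 : (fun t => (G t - F t) * p.eval (F t))
        = fun t => ∑ i ∈ Finset.range (p.natDegree + 1),
            p.coeff i * ((G t - F t) * F t ^ i) := by
      funext t
      rw [Polynomial.eval_eq_sum_range, Finset.mul_sum]
      congr 1
      funext i
      ring
    rw [e2]
    refine integrable_finset_sum _ fun i _ => Integrable.const_mul ?_ _
    have e3 : (fun t => (G t - F t) * F t ^ i)
        = fun t => G t * F t ^ i - F t * F t ^ i := by funext t; ring
    rw [e3]; exact (hGFn_int i).sub (hFFn_int i)
  -- vanishing against polynomials
  have hpoly : ∀ p : Polynomial ℝ, ∫ t, (G t - F t) * p.eval (F t) ∂μ = 0 := by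
    intro p
    have e : (fun t => (G t - F t) * p.eval (F t))
        = fun t => ∑ i ∈ Finset.range (p.natDegree + 1),
            p.coeff i * ((G t - F t) * F t ^ i) := by
      funext t
      rw [Polynomial.eval_eq_sum_range, Finset.mul_sum]
      congr 1
      funext i
      ring
    have hint : ∀ i ∈ Finset.range (p.natDegree + 1),
        Integrable (fun t => p.coeff i * ((G t - F t) * F t ^ i)) μ := by
      intro i _
      have h1 : Integrable (fun t => (G t - F t) * F t ^ i) μ := by
        have e2 : (fun t => (G t - F t) * F t ^ i)
            = fun t => G t * F t ^ i - F t * F t ^ i := by funext t; ring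
        rw [e2]; exact (hGFn_int i).sub (hFFn_int i)
      exact h1.const_mul _
    rw [e, integral_finset_sum _ hint]
    refine Finset.sum_eq_zero fun i _ => ?_
    rw [integral_const_mul]
    have h1 : ∫ t, (G t - F t) * F t ^ i ∂μ = 0 := hz i
    rw [h1, mul_zero]
  -- vanishing against continuous functions
  have hcont : ∀ ψ : ℝ → ℝ, Continuous ψ → ∫ t, (G t - F t) * ψ (F t) ∂μ = 0 := by
    intro ψ hψ
    have key : ∀ ε > (0:ℝ), |∫ t, (G t - F t) * ψ (F t) ∂μ| ≤ ε := by
      intro ε hε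
      obtain ⟨p, hp⟩ := exists_polynomial_near_of_continuousOn 0 1 ψ hψ.continuousOn ε hε
      have hptb : ∀ t, ‖(G t - F t) * (ψ (F t) - p.eval (F t))‖ ≤ ε := by
        intro t
        rw [norm_mul]
        have h1 : ‖ψ (F t) - p.eval (F t)‖ ≤ ε := by
          rw [Real.norm_eq_abs, abs_sub_comm]
          exact (hp (F t) ⟨hF_nn t, hF_le1 t⟩).le
        have h2 : ‖G t - F t‖ ≤ 1 := by rw [Real.norm_eq_abs]; exact habs2 t
        calc ‖G t - F t‖ * ‖ψ (F t) - p.eval (F t)‖ ≤ 1 * ε :=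
              mul_le_mul h2 h1 (norm_nonneg _) zero_le_one
          _ = ε := one_mul ε
      have hint1 : Integrable (fun t => (G t - F t) * (ψ (F t) - p.eval (F t))) μ :=
        hbdd_int _ ε ((hGc.sub hFc).mul ((hψ.sub p.continuous_aeval).comp hFc)) hptb
      have e : (fun t => (G t - F t) * ψ (F t))
          = fun t => (G t - F t) * (ψ (F t) - p.eval (F t)) + (G t - F t) * p.eval (F t) := by
        funext t; ring
      rw [e, integral_add hint1 (hpint p), hpoly p, add_zero]
      calc |∫ t, (G t - F t) * (ψ (F t) - p.eval (F t)) ∂μ|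
          ≤ ε * (μ Set.univ).toReal :=
            norm_integral_le_of_norm_le_const (Eventually.of_forall hptb)
        _ = ε := by simp
    by_contra h
    have h2 : 0 < |∫ t, (G t - F t) * ψ (F t) ∂μ| := abs_pos.2 h
    have := key (|∫ t, (G t - F t) * ψ (F t) ∂μ| / 2) (by linarith)
    linarith
  -- vanishing on level sets of F
  have hind : ∀ c : ℝ, ∫ t, ({t | F t ≤ c}).indicator (fun t => G t - F t) t ∂μ = 0 := by
    intro c
    set ψ : ℕ → ℝ → ℝ := fun k x => max 0 (min 1 (1 - (k + 1 : ℝ) * (x - c))) with hψdef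
    have hψc : ∀ k, Continuous (ψ k) := fun k =>
      continuous_const.max (continuous_const.min (by fun_prop))
    have hψ01 : ∀ k x, 0 ≤ ψ k x ∧ ψ k x ≤ 1 :=
      fun k x => ⟨le_max_left _ _, max_le zero_le_one (min_le_left _ _)⟩
    have hzero : ∀ k, ∫ t, (G t - F t) * ψ k (F t) ∂μ = 0 := fun k => hcont (ψ k) (hψc k)
    have hlim : ∀ t, Tendsto (fun k => (G t - F t) * ψ k (F t)) atTop
        (nhds (({t | F t ≤ c}).indicator (fun t => G t - F t) t)) := by
      intro t
      by_cases ht : F t ≤ c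
      · have hone : ∀ k, ψ k (F t) = 1 := by
          intro k
          have h1 : (1 : ℝ) ≤ 1 - (k + 1 : ℝ) * (F t - c) := by nlinarith [Nat.cast_nonneg (α := ℝ) k]
          simp only [hψdef, min_eq_left h1, max_eq_right zero_le_one]
        have : (fun k => (G t - F t) * ψ k (F t)) = fun _ => G t - F t := by
          funext k; rw [hone k, mul_one]
        have hmem : t ∈ {u | F u ≤ c} := ht
        rw [this, Set.indicator_of_mem hmem]
        exact tendsto_const_nhds
      · have hev : ∀ᶠ k in atTop, (0 : ℝ) = (G t - F t) * ψ k (F t) := by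
          filter_upwards [eventually_ge_atTop ⌈1 / (F t - c)⌉₊] with k hk
          have hd : 0 < F t - c := sub_pos.2 (not_le.1 ht)
          have h1 : 1 ≤ (k + 1 : ℝ) * (F t - c) := by
            have h2 : (1 : ℝ) / (F t - c) ≤ k := le_trans (Nat.le_ceil _) (Nat.cast_le.2 hk)
            have h3 : (1 : ℝ) = (1 / (F t - c)) * (F t - c) := by field_simp
            nlinarith
          have hz0 : ψ k (F t) = 0 := by
            simp only [hψdef]
            rw [min_eq_right (by linarith), max_eq_left (by linarith)]
          rw [hz0, mul_zero]
        have hmem : t ∉ {u | F u ≤ c} := ht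
        rw [Set.indicator_of_notMem hmem]
        exact Tendsto.congr' hev tendsto_const_nhds
    have hdom := tendsto_integral_of_dominated_convergence (μ := μ)
        (F := fun k t => (G t - F t) * ψ k (F t))
        (f := fun t => ({t | F t ≤ c}).indicator (fun t => G t - F t) t)
        (bound := fun _ => (1 : ℝ))
        (fun k => ((hGc.sub hFc).mul ((hψc k).comp hFc)).aestronglyMeasurable)
        (integrable_const 1)
        (fun k => Eventually.of_forall fun t => by
          rw [norm_mul]
          have h1 : ‖ψ k (F t)‖ ≤ 1 := by
            rw [Real.norm_eq_abs, abs_le]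
            exact ⟨by linarith [(hψ01 k (F t)).1], (hψ01 k (F t)).2⟩
          have h2 : ‖G t - F t‖ ≤ 1 := by rw [Real.norm_eq_abs]; exact habs2 t
          calc ‖G t - F t‖ * ‖ψ k (F t)‖ ≤ 1 * 1 :=
                mul_le_mul h2 h1 (norm_nonneg _) zero_le_one
            _ = 1 := one_mul 1)
        (Eventually.of_forall hlim)
    simp only [hzero] at hdom
    exact tendsto_nhds_unique hdom tendsto_const_nhds
  -- vanishing on Iic
  have hIic : ∀ a : ℝ, ∫ t in Iic a, (G t - F t) ∂μ = 0 := by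
    intro a
    have h0 := hind (F a)
    rw [integral_indicator (measurableSet_le hFc.measurable measurable_const)] at h0
    have hsub : Iic a ⊆ {t | F t ≤ F a} := fun t ht => F.mono ht
    have hμS : μ {t | F t ≤ F a} = ENNReal.ofReal (F a) := by
      rw [hμ, stieltjes_levelset F hFc hF0 hF1, min_eq_left (hF_le1 a)]
    have hμI : μ (Iic a) = ENNReal.ofReal (F a) := by
      rw [hμ, F.measure_Iic hF0]; simp
    have hae : {t | F t ≤ F a} =ᵐ[μ] Iic a := by
      rw [MeasureTheory.ae_eq_set]
      constructor
      · rw [measure_diff hsub nullMeasurableSet_Iic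
          (by rw [hμI]; exact ENNReal.ofReal_ne_top), hμS, hμI, tsub_self]
      · rw [diff_eq_empty.2 hsub, measure_empty]
    rwa [setIntegral_congr_set hae] at h0
  have hGint : Integrable G μ := hbdd_int G 1 hGc fun t => by
    rw [Real.norm_eq_abs, abs_le]; exact ⟨by linarith [hG_nn t], hG_le1 t⟩
  have hFint : Integrable (fun t => F t) μ := hbdd_int _ 1 hFc fun t => by
    rw [Real.norm_eq_abs, abs_le]; exact ⟨by linarith [hF_nn t], hF_le1 t⟩
  have hIicGF : ∀ a : ℝ, ∫ t in Iic a, G t ∂μ = ∫ t in Iic a, F t ∂μ := by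
    intro a
    have h0 := hIic a
    rw [integral_sub hGint.integrableOn hFint.integrableOn] at h0
    linarith
  haveI : IsFiniteMeasure (μ.withDensity fun t => ENNReal.ofReal (G t)) :=
    isFiniteMeasure_withDensity_ofReal hGint.hasFiniteIntegral
  have hAB : (μ.withDensity fun t => ENNReal.ofReal (G t))
      = μ.withDensity fun t => ENNReal.ofReal (F t) := by
    refine Measure.ext_of_Iic _ _ fun a => ?_
    rw [withDensity_apply _ measurableSet_Iic, withDensity_apply _ measurableSet_Iic,
      ← ofReal_integral_eq_lintegral_ofReal hGint.integrableOn (Eventually.of_forall hG_nn),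
      ← ofReal_integral_eq_lintegral_ofReal hFint.integrableOn (Eventually.of_forall hF_nn),
      hIicGF a]
  have hae := (withDensity_eq_iff_of_sigmaFinite
      (ENNReal.measurable_ofReal.comp hGc.measurable).aemeasurable
      (ENNReal.measurable_ofReal.comp hFc.measurable).aemeasurable).1 hAB
  filter_upwards [hae] with t ht
  exact (ENNReal.ofReal_eq_ofReal_iff (hG_nn t) (hF_nn t)).1 ht
end

section
/- Let F be a continuous cumulative distribution function on ℝ with quantile function Q(u) = inf{x : F(x) > u}, and let G : ℝ → [0,1] and h : [0,1] × [0,1] → [0,1] be measurable. Then ∫_ℝ h(G(t), F(t)) dF(t) = ∫_0^1 h(G(Q(u)), u) du. -/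
open MeasureTheory Filter

/-- Change of variables through the quantile function: for a continuous CDF `F`
with quantile function `Q(u) = inf {x | F x > u}`, and measurable `G : ℝ → [0,1]`,
`h : [0,1] × [0,1] → [0,1]`, one has
`∫ h(G(t), F(t)) dF(t) = ∫_0^1 h(G(Q(u)), u) du`. -/
theorem integral_quantile_change_of_variables
    (F : StieltjesFunction ℝ) (hFc : Continuous F)
    (hF0 : Tendsto F atBot (nhds 0)) (hF1 : Tendsto F atTop (nhds 1))
    (Q : ℝ → ℝ) (hQ : ∀ u, Q u = sInf {x : ℝ | u < F x})
    (G : ℝ → ℝ) (hGm : Measurable G) (hGrange : ∀ t, G t ∈ Set.Icc (0:ℝ) 1)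
    (h : ℝ → ℝ → ℝ) (hhm : Measurable fun p : ℝ × ℝ => h p.1 p.2)
    (hhrange : ∀ x y, h x y ∈ Set.Icc (0:ℝ) 1) :
    ∫ t, h (G t) (F t) ∂F.measure = ∫ u in Set.Ioo (0:ℝ) 1, h (G (Q u)) u := by
  -- basic bounds on F
  have hFle1 : ∀ x, F x ≤ 1 := fun x => F.mono.ge_of_tendsto hF1 x
  -- nonempty and bddBelow of the quantile sets
  have hne : ∀ u : ℝ, u < 1 → {x : ℝ | u < F x}.Nonempty := fun u hu =>
    (hF1.eventually (eventually_gt_nhds hu)).exists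
  have hbdd : ∀ u : ℝ, 0 < u → BddBelow {x : ℝ | u < F x} := by
    intro u hu
    obtain ⟨y, hy⟩ := (hF0.eventually (eventually_lt_nhds hu)).exists
    refine ⟨y, fun z hz => ?_⟩
    by_contra hzy
    exact absurd (lt_trans hy hz) (not_lt.2 (F.mono (le_of_not_ge hzy)))
  -- Q u ≤ x whenever u < F x
  have hQle : ∀ u : ℝ, 0 < u → ∀ x, u < F x → Q u ≤ x := by
    intro u hu x hx
    rw [hQ]
    exact csInf_le (hbdd u hu) hx
  -- F (Q u) = u on (0,1)
  have hFQ : ∀ u ∈ Set.Ioo (0:ℝ) 1, F (Q u) = u := by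
    rintro u ⟨hu0, hu1⟩
    refine le_antisymm ?_ ?_
    · by_contra hlt
      push_neg at hlt
      have hev : ∀ᶠ x in nhds (Q u), u < F x :=
        (hFc.continuousAt (x := Q u)).eventually (eventually_gt_nhds hlt)
      have hev' : ∀ᶠ x in nhdsWithin (Q u) (Set.Iio (Q u)), u < F x ∧ x < Q u :=
        ((hev.filter_mono nhdsWithin_le_nhds).and self_mem_nhdsWithin)
      obtain ⟨x, hxu, hxQ⟩ := hev'.exists
      exact absurd (hQle u hu0 x hxu) (not_le.2 hxQ)
    · have hcl : Q u ∈ closure {x : ℝ | u < F x} := by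
        rw [hQ]
        exact csInf_mem_closure (hne u hu1) (hbdd u hu0)
      have hclosed : IsClosed {x : ℝ | u ≤ F x} := isClosed_le continuous_const hFc
      have := hclosed.closure_subset_iff.2
        (fun x (hx : u < F x) => le_of_lt hx) hcl
      exact this
  -- Q is monotone on (0,1)
  have hQmono : MonotoneOn Q (Set.Ioo (0:ℝ) 1) := by
    rintro u ⟨hu0, _⟩ v ⟨hv0, hv1⟩ huv
    rw [hQ, hQ]
    exact csInf_le_csInf (hbdd u hu0) (hne v hv1)
      (fun x hx => lt_of_le_of_lt huv hx)
  have hQae : AEMeasurable Q (volume.restrict (Set.Ioo (0:ℝ) 1)) :=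
    aemeasurable_restrict_of_monotoneOn measurableSet_Ioo hQmono
  haveI : IsProbabilityMeasure F.measure := F.isProbabilityMeasure hF0 hF1
  -- the pushforward of Lebesgue on (0,1) by Q is F.measure
  have hmap : (volume.restrict (Set.Ioo (0:ℝ) 1)).map Q = F.measure := by
    haveI : IsFiniteMeasure ((volume.restrict (Set.Ioo (0:ℝ) 1)).map Q) := by
      constructor
      rw [Measure.map_apply_of_aemeasurable hQae MeasurableSet.univ]
      simp [Real.volume_Ioo]
    refine MeasureTheory.Measure.ext_of_Iic _ _ (fun x => ?_)
    rw [Measure.map_apply_of_aemeasurable hQae measurableSet_Iic,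
      Measure.restrict_apply' measurableSet_Ioo, F.measure_Iic hF0, sub_zero]
    have hsub1 : Set.Ioo (0:ℝ) (F x) ⊆ Q ⁻¹' Set.Iic x ∩ Set.Ioo 0 1 := by
      rintro u ⟨hu0, huF⟩
      exact ⟨hQle u hu0 x huF, hu0, lt_of_lt_of_le huF (hFle1 x)⟩
    have hsub2 : Q ⁻¹' Set.Iic x ∩ Set.Ioo 0 1 ⊆ Set.Ioc (0:ℝ) (F x) := by
      rintro u ⟨hQu, hu⟩
      exact ⟨hu.1, (hFQ u hu) ▸ F.mono hQu⟩
    refine le_antisymm ?_ ?_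
    · calc volume (Q ⁻¹' Set.Iic x ∩ Set.Ioo 0 1) ≤ volume (Set.Ioc (0:ℝ) (F x)) :=
            measure_mono hsub2
        _ = ENNReal.ofReal (F x) := by rw [Real.volume_Ioc, sub_zero]
    · calc ENNReal.ofReal (F x) = volume (Set.Ioo (0:ℝ) (F x)) := by
            rw [Real.volume_Ioo, sub_zero]
        _ ≤ volume (Q ⁻¹' Set.Iic x ∩ Set.Ioo 0 1) := measure_mono hsub1
  -- change of variables
  have hmeas : AEStronglyMeasurable (fun t => h (G t) (F t))
      ((volume.restrict (Set.Ioo (0:ℝ) 1)).map Q) :=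
    (hhm.comp (hGm.prodMk hFc.measurable)).aestronglyMeasurable
  calc ∫ t, h (G t) (F t) ∂F.measure
      = ∫ t, h (G t) (F t) ∂((volume.restrict (Set.Ioo (0:ℝ) 1)).map Q) := by rw [hmap]
    _ = ∫ u in Set.Ioo (0:ℝ) 1, h (G (Q u)) (F (Q u)) := integral_map hQae hmeas
    _ = ∫ u in Set.Ioo (0:ℝ) 1, h (G (Q u)) u :=
        setIntegral_congr_fun measurableSet_Ioo (fun u hu => by rw [hFQ u hu])
end

section
/- Let {F_α : α > 0} be a family of CDFs such that whenever X_{α_1}, ..., X_{α_n} are independent with X_{α_i} ~ F_{α_i}, we have P(X_{α_1} > max(X_{α_2},...,X_{α_n})) = α_1/(α_1+...+α_n) for all n ≥ 2. Then every F_α is continuous. -/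
open MeasureTheory ProbabilityTheory

/-- A family `{F α, α > 0}` of CDFs is max-compatible if for all `n ≥ 2` and
independent `X i ~ F (α i)`, the probability that `X 0` exceeds the maximum of
the others equals `α 0 / ∑ α i`. -/
def MaxCompatible (F : ℝ → ℝ → ℝ) : Prop :=
  ∀ (n : ℕ) (hn : 2 ≤ n) (α : Fin n → ℝ), (∀ i, 0 < α i) →
  ∀ (Ω : Type) [MeasureSpace Ω] [IsProbabilityMeasure (ℙ : Measure Ω)]
    (X : Fin n → Ω → ℝ), (∀ i, Measurable (X i)) →
    iIndepFun X ℙ →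
    (∀ i t, (ℙ {ω | X i ω ≤ t}).toReal = F (α i) t) →
    (ℙ {ω | ∀ j, j ≠ (⟨0, by omega⟩ : Fin n) → X j ω < X (⟨0, by omega⟩ : Fin n) ω}).toReal
      = α ⟨0, by omega⟩ / ∑ i, α i

/-- `F` is the cumulative distribution function of some probability measure on `ℝ`. -/
def IsCDF (F : ℝ → ℝ) : Prop :=
  ∃ μ : Measure ℝ, IsProbabilityMeasure μ ∧ ∀ t, (μ (Set.Iic t)).toReal = F t

lemma pi_eval_pre (μ : Measure ℝ) [IsProbabilityMeasure μ] (k : Fin 2) (s : Set ℝ) :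
    (Measure.pi fun _ : Fin 2 => μ) ((fun ω => ω k) ⁻¹' s) = μ s := by
  have h1 : ((fun ω : Fin 2 → ℝ => ω k) ⁻¹' s)
      = Set.pi Set.univ (fun j => if j = k then s else Set.univ) := by
    ext ω
    simp only [Set.mem_preimage, Set.mem_pi, Set.mem_univ, true_implies]
    constructor
    · intro h j
      by_cases hj : j = k <;> simp [hj, h]
    · intro h
      have := h k
      simpa using this
  rw [h1, Measure.pi_pi]
  simp [apply_ite μ]

lemma coordIndep (μ : Measure ℝ) [IsProbabilityMeasure μ] (e : Fin 2 ≃ Fin 2) :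
    iIndepFun (Ω := Fin 2 → ℝ)
      (fun i ω => ω (e i)) (Measure.pi fun _ => μ) := by
  rw [iIndepFun_iff_measure_inter_preimage_eq_mul]
  intro S sets _
  have h1 : (⋂ i ∈ S, (fun ω : Fin 2 → ℝ => ω (e i)) ⁻¹' sets i)
      = Set.pi Set.univ (fun j => if e.symm j ∈ S then sets (e.symm j) else Set.univ) := by
    ext ω
    simp only [Set.mem_iInter, Set.mem_preimage, Set.mem_pi, Set.mem_univ, true_implies]
    constructor
    · intro h j
      by_cases hj : e.symm j ∈ S
      · have := h _ hj
        simpa [hj] using this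
      · simp [hj]
    · intro h i hi
      have := h (e i)
      simpa [hi] using this
  rw [h1, Measure.pi_pi]
  have h2 : ∀ j : Fin 2, μ (if e.symm j ∈ S then sets (e.symm j) else Set.univ)
      = if e.symm j ∈ S then μ (sets (e.symm j)) else 1 := by
    intro j; by_cases hj : e.symm j ∈ S <;> simp [hj]
  simp_rw [h2]
  rw [← Equiv.prod_comp e (fun j => if e.symm j ∈ S then μ (sets (e.symm j)) else 1)]
  simp_rw [Equiv.symm_apply_apply]
  rw [Finset.prod_ite_mem Finset.univ S (fun i => μ (sets i)), Finset.univ_inter]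
  refine Finset.prod_congr rfl fun i _ => ?_
  exact (pi_eval_pre μ (e i) (sets i)).symm

/-- Every member of a max-compatible family of CDFs is continuous. -/
theorem maxCompatible_continuous
    (F : ℝ → ℝ → ℝ) (hCDF : ∀ α : ℝ, 0 < α → IsCDF (F α))
    (hmax : MaxCompatible F) :
    ∀ α : ℝ, 0 < α → Continuous (F α) := by
  intro α hα
  obtain ⟨μ, hμprob, hμcdf⟩ := hCDF α hα
  -- set up the product space
  letI : MeasureSpace (Fin 2 → ℝ) := ⟨Measure.pi fun _ => μ⟩
  haveI : IsProbabilityMeasure (ℙ : Measure (Fin 2 → ℝ)) :=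
    inferInstanceAs (IsProbabilityMeasure (Measure.pi fun _ => μ))
  -- the key probability computations
  have hsum : (α / ∑ _i : Fin 2, α) = 1 / 2 := by
    rw [Finset.sum_const]
    simp only [Finset.card_univ, Fintype.card_fin]
    field_simp
    ring
  have happ : ∀ e : Fin 2 ≃ Fin 2,
      (ℙ {ω : Fin 2 → ℝ | ∀ j, j ≠ (0 : Fin 2) → ω (e j) < ω (e 0)}).toReal = 1 / 2 := by
    intro e
    have := hmax 2 (le_refl 2) (fun _ => α) (fun _ => hα) (Fin 2 → ℝ)
      (fun i ω => ω (e i)) (fun i => measurable_pi_apply (e i))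
      (coordIndep μ e) ?_
    · rw [← hsum]
      convert this using 3 <;> rfl
    · intro i t
      have : {ω : Fin 2 → ℝ | ω (e i) ≤ t} = (fun ω : Fin 2 → ℝ => ω (e i)) ⁻¹' Set.Iic t := rfl
      show (ℙ {ω : Fin 2 → ℝ | ω (e i) ≤ t}).toReal = F α t
      rw [this, show (ℙ : Measure (Fin 2 → ℝ)) = Measure.pi fun _ => μ from rfl,
        pi_eval_pre μ (e i) (Set.Iic t), hμcdf]
  -- the two half-probability sets
  have hS1 : (ℙ {ω : Fin 2 → ℝ | ω 1 < ω 0}) = 1 / 2 := by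
    have h := happ (Equiv.refl _)
    have hset : {ω : Fin 2 → ℝ | ∀ j, j ≠ (0 : Fin 2) → ω ((Equiv.refl (Fin 2)) j) < ω ((Equiv.refl (Fin 2)) 0)}
        = {ω : Fin 2 → ℝ | ω 1 < ω 0} := by
      ext ω
      simp only [Set.mem_setOf_eq, Equiv.refl_apply]
      constructor
      · intro h; exact h 1 (by decide)
      · intro h j hj
        fin_cases j
        · exact absurd rfl hj
        · exact h
    rw [hset] at h
    rw [← ENNReal.ofReal_toReal (measure_ne_top ℙ _), h]
    norm_num [ENNReal.ofReal_div_of_pos]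
  have hS2 : (ℙ {ω : Fin 2 → ℝ | ω 0 < ω 1}) = 1 / 2 := by
    have h := happ (Equiv.swap 0 1)
    have hset : {ω : Fin 2 → ℝ | ∀ j, j ≠ (0 : Fin 2) → ω ((Equiv.swap (0:Fin 2) 1) j) < ω ((Equiv.swap (0:Fin 2) 1) 0)}
        = {ω : Fin 2 → ℝ | ω 0 < ω 1} := by
      ext ω
      simp only [Set.mem_setOf_eq]
      constructor
      · intro h
        have := h 1 (by decide)
        simpa [Equiv.swap_apply_left, Equiv.swap_apply_right] using this
      · intro h j hj
        fin_cases j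
        · exact absurd rfl hj
        · simpa [Equiv.swap_apply_left, Equiv.swap_apply_right] using h
    rw [hset] at h
    rw [← ENNReal.ofReal_toReal (measure_ne_top ℙ _), h]
    norm_num [ENNReal.ofReal_div_of_pos]
  -- the diagonal has measure zero
  have hdiag : (ℙ {ω : Fin 2 → ℝ | ω 0 = ω 1}) = 0 := by
    have hcompl : {ω : Fin 2 → ℝ | ω 0 = ω 1}
        = ({ω : Fin 2 → ℝ | ω 1 < ω 0} ∪ {ω : Fin 2 → ℝ | ω 0 < ω 1})ᶜ := by
      ext ω
      simp only [Set.mem_setOf_eq, Set.mem_compl_iff, Set.mem_union, not_or, not_lt]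
      constructor
      · intro h; exact ⟨le_of_eq h, le_of_eq h.symm⟩
      · intro h; exact le_antisymm h.1 h.2
    have hdisj : Disjoint {ω : Fin 2 → ℝ | ω 1 < ω 0} {ω : Fin 2 → ℝ | ω 0 < ω 1} := by
      rw [Set.disjoint_left]
      intro ω h1 h2
      simp only [Set.mem_setOf_eq] at h1 h2
      exact lt_asymm h1 h2
    have hmeas2 : MeasurableSet {ω : Fin 2 → ℝ | ω 0 < ω 1} :=
      measurableSet_lt (measurable_pi_apply 0) (measurable_pi_apply 1)
    rw [hcompl, measure_compl ((measurableSet_lt (measurable_pi_apply 1)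
      (measurable_pi_apply 0)).union hmeas2) (measure_ne_top _ _),
      measure_union hdisj hmeas2, hS1, hS2]
    rw [ENNReal.add_halves, measure_univ, tsub_self]
  -- hence μ has no atoms
  have hatom : ∀ x : ℝ, μ {x} = 0 := by
    intro x
    have hsub : Set.pi Set.univ (fun _ : Fin 2 => ({x} : Set ℝ))
        ⊆ {ω : Fin 2 → ℝ | ω 0 = ω 1} := by
      intro ω hω
      simp only [Set.mem_pi, Set.mem_univ, Set.mem_singleton_iff, true_implies] at hω
      show ω 0 = ω 1
      rw [hω 0, hω 1]
    have h0 : (ℙ : Measure (Fin 2 → ℝ)) (Set.pi Set.univ (fun _ : Fin 2 => ({x} : Set ℝ))) = 0 :=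
      measure_mono_null hsub hdiag
    rw [show (ℙ : Measure (Fin 2 → ℝ)) = Measure.pi fun _ => μ from rfl, Measure.pi_pi] at h0
    simp only [Fin.prod_univ_two] at h0
    exact (mul_self_eq_zero).mp h0
  haveI : NoAtoms μ := ⟨hatom⟩
  -- F α equals the cdf of μ
  have hF : F α = ⇑(cdf μ) := by
    funext t
    rw [cdf_eq_real, measureReal_def, ← hμcdf t]
  rw [hF]
  -- the cdf is continuous since μ has no atoms
  rw [continuous_iff_continuousAt]
  intro x
  have hleft : Function.leftLim (⇑(cdf μ)) x = cdf μ x := by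
    have h1 := (cdf μ).measure_singleton x
    rw [measure_cdf, hatom x] at h1
    have h2 : cdf μ x - Function.leftLim (⇑(cdf μ)) x ≤ 0 := ENNReal.ofReal_eq_zero.mp h1.symm
    have h3 : Function.leftLim (⇑(cdf μ)) x ≤ cdf μ x := (cdf μ).mono.leftLim_le le_rfl
    linarith
  rw [(cdf μ).mono.continuousAt_iff_leftLim_eq_rightLim, hleft, (cdf μ).rightLim_eq]
end

section
/- Let F be a continuous CDF and α_1, α_2 > 0. If X_{α_1} and X_{α_2} are independent random variables with CDFs F^{α_1} and F^{α_2} respectively, then P(X_{α_1} > X_{α_2}) = α_1/(α_1 + α_2). -/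
open MeasureTheory ProbabilityTheory Set Filter Topology

/-- Pointwise relation between the two power-CDFs, valid even when `F` takes
negative values (where `rpow` is defined via `exp`/`cos`). -/
lemma aux_pow_rel (F : ℝ → ℝ) (hFc : Continuous F) (α₁ α₂ : ℝ) (hα₁ : 0 < α₁) (hα₂ : 0 < α₂)
    (Hmono : Monotone fun t => F t ^ α₁)
    (Hnn : ∀ t, 0 ≤ F t ^ α₁) (Knn : ∀ t, 0 ≤ F t ^ α₂)
    (Kmono : Monotone fun t => F t ^ α₂)
    (Htop : Tendsto (fun t => F t ^ α₁) atTop (𝓝 1))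
    (Ktop : Tendsto (fun t => F t ^ α₂) atTop (𝓝 1))
    (t : ℝ) : F t ^ α₂ = (F t ^ α₁) ^ (α₂ / α₁) := by
  by_cases hpos : 0 ≤ F t
  · rw [← Real.rpow_mul hpos]
    congr 1
    field_simp
  · push_neg at hpos
    by_cases hex : ∃ s, t ≤ s ∧ 0 ≤ F s
    · obtain ⟨s, hts, hFs⟩ := hex
      have h0 : (0:ℝ) ∈ Icc (F t) (F s) := ⟨hpos.le, hFs⟩
      obtain ⟨u, hu, hFu⟩ := intermediate_value_Icc hts hFc.continuousOn h0
      have hHu : F u ^ α₁ = 0 := by rw [hFu]; exact Real.zero_rpow hα₁.ne'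
      have hKu : F u ^ α₂ = 0 := by rw [hFu]; exact Real.zero_rpow hα₂.ne'
      have h1 : F t ^ α₁ = 0 :=
        le_antisymm (by simpa [hHu] using Hmono hu.1) (Hnn t)
      have h2 : F t ^ α₂ = 0 :=
        le_antisymm (by simpa [hKu] using Kmono hu.1) (Knn t)
      rw [h1, h2, Real.zero_rpow (div_pos hα₂ hα₁).ne']
    · push_neg at hex
      have hneg : ∀ s, t ≤ s → F s < 0 := hex
      set c₁ := Real.cos (α₁ * Real.pi) with hc₁def
      set c₂ := Real.cos (α₂ * Real.pi) with hc₂def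
      have hH : ∀ s, t ≤ s → F s ^ α₁ = Real.exp (Real.log (F s) * α₁) * c₁ :=
        fun s hs => Real.rpow_def_of_neg (hneg s hs) α₁
      have hK : ∀ s, t ≤ s → F s ^ α₂ = Real.exp (Real.log (F s) * α₂) * c₂ :=
        fun s hs => Real.rpow_def_of_neg (hneg s hs) α₂
      have hc₁ : c₁ ≠ 0 := by
        intro hc
        obtain ⟨s, hs1, hs2⟩ := ((Htop.eventually_const_lt (by norm_num : (1:ℝ)/2 < 1)).and
          (eventually_ge_atTop t)).exists
        rw [hH s hs2, hc, mul_zero] at hs1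
        norm_num at hs1
      have hc₁pos : 0 < c₁ := by
        rcases hc₁.lt_or_gt with h | h
        · exfalso
          have := Hnn t
          rw [hH t le_rfl] at this
          nlinarith [Real.exp_pos (Real.log (F t) * α₁)]
        · exact h
      have hEtend : Tendsto (fun s => Real.exp (Real.log (F s) * α₁)) atTop (𝓝 (1 / c₁)) := by
        refine (Htop.div_const c₁).congr' ?_
        filter_upwards [eventually_ge_atTop t] with s hs
        rw [hH s hs]
        field_simp
      have hLtend : Tendsto (fun s => Real.log (F s) * α₁) atTop (𝓝 (Real.log (1 / c₁))) := by
        have := (Real.continuousAt_log (by positivity : (1:ℝ)/c₁ ≠ 0)).tendsto.comp hEtend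
        simpa [Function.comp_def, Real.log_exp] using this
      have hlog : Tendsto (fun s => Real.log (F s)) atTop (𝓝 (Real.log (1 / c₁) / α₁)) := by
        have h := hLtend.div_const α₁
        refine h.congr fun s => ?_
        field_simp
      have hKtend : Tendsto (fun s => Real.exp (Real.log (F s) * α₂) * c₂) atTop
          (𝓝 (Real.exp (Real.log (1 / c₁) / α₁ * α₂) * c₂)) :=
        ((Real.continuous_exp.tendsto _).comp (hlog.mul_const α₂)).mul_const c₂
      have hKtend' : Tendsto (fun s => Real.exp (Real.log (F s) * α₂) * c₂) atTop (𝓝 1) := by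
        refine Ktop.congr' ?_
        filter_upwards [eventually_ge_atTop t] with s hs
        exact hK s hs
      have hc₂eq : Real.exp (Real.log (1 / c₁) / α₁ * α₂) * c₂ = 1 :=
        tendsto_nhds_unique hKtend hKtend'
      have hc₂ : c₂ = Real.exp (-(Real.log (1 / c₁) / α₁ * α₂)) := by
        rw [Real.exp_neg]
        field_simp at hc₂eq ⊢
        linarith [hc₂eq]
      have hlog1c : Real.log (1 / c₁) = - Real.log c₁ := by
        rw [one_div, Real.log_inv]
      rw [hK t le_rfl, hH t le_rfl,
        Real.rpow_def_of_pos (by positivity : 0 < Real.exp (Real.log (F t) * α₁) * c₁),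
        Real.log_mul (Real.exp_ne_zero _) hc₁pos.ne', Real.log_exp, hc₂, hlog1c,
        ← Real.exp_add]
      congr 1
      field_simp

/-- A probability measure on `ℝ` whose CDF is a continuous monotone function `H`
pushes forward under `H` to the uniform distribution on `(0,1]`. -/
lemma aux_map_uniform (μ : Measure ℝ) [IsProbabilityMeasure μ] (H : ℝ → ℝ)
    (hIic : ∀ t, μ (Iic t) = ENNReal.ofReal (H t))
    (hHc : Continuous H) (hmono : Monotone H)
    (h0 : ∀ t, 0 ≤ H t) (h1 : ∀ t, H t ≤ 1)
    (hbot : Tendsto H atBot (𝓝 0)) (htop : Tendsto H atTop (𝓝 1)) :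
    Measure.map H μ = volume.restrict (Ioc 0 1) := by
  have hHm : Measurable H := hmono.measurable
  haveI : IsFiniteMeasure (volume.restrict (Ioc (0:ℝ) 1)) := ⟨by simp⟩
  refine Measure.ext_of_Iic _ _ (fun v => ?_)
  rw [Measure.map_apply hHm measurableSet_Iic, Measure.restrict_apply measurableSet_Iic,
    Set.inter_comm, Set.Ioc_inter_Iic, Real.volume_Ioc]
  rcases le_or_gt 1 v with hv | hv
  · have huniv : H ⁻¹' Iic v = univ := eq_univ_of_forall fun x => (h1 x).trans hv
    rw [huniv, min_eq_left hv]
    simp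
  · rcases lt_or_ge v 0 with hv0 | hv0
    · have hemp : H ⁻¹' Iic v = ∅ :=
        eq_empty_of_forall_notMem fun x hx => absurd ((h0 x).trans hx) (not_le.mpr hv0)
      rw [hemp, min_eq_right hv.le]
      simp [hv0.le]
    · by_cases hS : (H ⁻¹' Iic v).Nonempty
      · have hSc : IsClosed (H ⁻¹' Iic v) := IsClosed.preimage hHc isClosed_Iic
        have hbdd : BddAbove (H ⁻¹' Iic v) := by
          obtain ⟨b, hb⟩ := eventually_atTop.mp (htop.eventually_const_lt hv)
          refine ⟨b, fun x hx => ?_⟩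
          by_contra hxb
          exact absurd hx (not_le.mpr (hb x (le_of_not_ge hxb)))
        set a := sSup (H ⁻¹' Iic v) with ha
        have haS : a ∈ H ⁻¹' Iic v := hSc.csSup_mem hS hbdd
        have hSeq : H ⁻¹' Iic v = Iic a :=
          subset_antisymm (fun x hx => le_csSup hbdd hx)
            (fun x hx => le_trans (hmono hx) haS)
        have hHa : H a = v := by
          refine le_antisymm haS ?_
          by_contra hlt
          push_neg at hlt
          have hev : ∀ᶠ x in 𝓝 a, H x < v := (hHc.tendsto a).eventually_lt_const hlt
          obtain ⟨x, hx1, hx2⟩ :=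
            ((hev.filter_mono (nhdsWithin_le_nhds (s := Ioi a))).and self_mem_nhdsWithin).exists
          exact absurd (le_csSup hbdd (show x ∈ H ⁻¹' Iic v from hx1.le)) (not_le.mpr hx2)
        rw [hSeq, hIic, hHa, min_eq_right hv.le, sub_zero]
      · rw [not_nonempty_iff_eq_empty.mp hS]
        have hv0' : v ≤ 0 := by
          by_contra h
          push_neg at h
          obtain ⟨x, hx⟩ := (hbot.eventually_lt_const h).exists
          exact hS ⟨x, hx.le⟩
        have : v = 0 := le_antisymm hv0' hv0
        simp [this]

/-- A probability measure with continuous CDF gives `Iio` the same mass as `Iic`. -/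
lemma aux_Iio (μ : Measure ℝ) [IsProbabilityMeasure μ] (K : ℝ → ℝ)
    (hK : ∀ t, μ (Iic t) = ENNReal.ofReal (K t)) (hKc : Continuous K) (x : ℝ) :
    μ (Iio x) = ENNReal.ofReal (K x) := by
  refine le_antisymm (by rw [← hK x]; exact measure_mono Iio_subset_Iic_self) ?_
  have h1 : Tendsto (fun n : ℕ => ENNReal.ofReal (K (x - 1/(n+1)))) atTop
      (𝓝 (ENNReal.ofReal (K x))) := by
    refine (ENNReal.continuous_ofReal.tendsto _).comp ((hKc.tendsto x).comp ?_)
    have h2 : Tendsto (fun n : ℕ => x - 1/(n+1)) atTop (𝓝 (x - 0)) :=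
      tendsto_const_nhds.sub tendsto_one_div_add_atTop_nhds_zero_nat
    simpa using h2
  refine le_of_tendsto h1 (Eventually.of_forall fun n => ?_)
  rw [← hK]
  refine measure_mono (Iic_subset_Iio.mpr ?_)
  have : (0:ℝ) < 1/(n+1) := by positivity
  linarith

/-- If `F` is a continuous CDF, `α₁, α₂ > 0`, and `X₁, X₂` are independent random
variables with CDFs `F^α₁` and `F^α₂`, then `P(X₁ > X₂) = α₁/(α₁+α₂)`. -/
theorem prob_gt_of_pow_cdf
    {Ω : Type} [MeasureSpace Ω] [IsProbabilityMeasure (ℙ : Measure Ω)]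
    (F : ℝ → ℝ) (hFc : Continuous F)
    (α₁ α₂ : ℝ) (hα₁ : 0 < α₁) (hα₂ : 0 < α₂)
    (X₁ X₂ : Ω → ℝ) (hX₁ : Measurable X₁) (hX₂ : Measurable X₂)
    (hindep : IndepFun X₁ X₂ ℙ)
    (hcdf₁ : ∀ t, (ℙ {ω | X₁ ω ≤ t}).toReal = F t ^ α₁)
    (hcdf₂ : ∀ t, (ℙ {ω | X₂ ω ≤ t}).toReal = F t ^ α₂) :
    (ℙ {ω | X₂ ω < X₁ ω}).toReal = α₁ / (α₁ + α₂) := by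
  set μ₁ := Measure.map X₁ ℙ with hμ₁def
  set μ₂ := Measure.map X₂ ℙ with hμ₂def
  haveI : IsProbabilityMeasure μ₁ := Measure.isProbabilityMeasure_map hX₁.aemeasurable
  haveI : IsProbabilityMeasure μ₂ := Measure.isProbabilityMeasure_map hX₂.aemeasurable
  set H := fun t => F t ^ α₁ with hHdef
  set K := fun t => F t ^ α₂ with hKdef
  have hμ₁Iic : ∀ t, μ₁ (Iic t) = ENNReal.ofReal (H t) := fun t => by
    show μ₁ (Iic t) = ENNReal.ofReal (F t ^ α₁)
    rw [hμ₁def, Measure.map_apply hX₁ measurableSet_Iic, ← hcdf₁ t,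
      ENNReal.ofReal_toReal (measure_ne_top _ _)]
    rfl
  have hμ₂Iic : ∀ t, μ₂ (Iic t) = ENNReal.ofReal (K t) := fun t => by
    show μ₂ (Iic t) = ENNReal.ofReal (F t ^ α₂)
    rw [hμ₂def, Measure.map_apply hX₂ measurableSet_Iic, ← hcdf₂ t,
      ENNReal.ofReal_toReal (measure_ne_top _ _)]
    rfl
  have hHnn : ∀ t, 0 ≤ H t := fun t => by show 0 ≤ F t ^ α₁; rw [← hcdf₁ t]; exact ENNReal.toReal_nonneg
  have hKnn : ∀ t, 0 ≤ K t := fun t => by show 0 ≤ F t ^ α₂; rw [← hcdf₂ t]; exact ENNReal.toReal_nonneg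
  have hHle1 : ∀ t, H t ≤ 1 := fun t => by
    show F t ^ α₁ ≤ 1
    rw [← hcdf₁ t]
    exact ENNReal.toReal_le_of_le_ofReal one_pos.le (by simpa using prob_le_one)
  have hHmono : Monotone H := fun s u hsu => by
    show F s ^ α₁ ≤ F u ^ α₁
    rw [← hcdf₁ s, ← hcdf₁ u]
    exact ENNReal.toReal_mono (measure_ne_top _ _)
      (measure_mono fun ω (h : X₁ ω ≤ s) => le_trans h hsu)
  have hKmono : Monotone K := fun s u hsu => by
    show F s ^ α₂ ≤ F u ^ α₂
    rw [← hcdf₂ s, ← hcdf₂ u]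
    exact ENNReal.toReal_mono (measure_ne_top _ _)
      (measure_mono fun ω (h : X₂ ω ≤ s) => le_trans h hsu)
  have hHcdf : ∀ t, H t = cdf μ₁ t := fun t => by
    rw [cdf_eq_real, measureReal_def, hμ₁Iic t, ENNReal.toReal_ofReal (hHnn t)]
  have hKcdf : ∀ t, K t = cdf μ₂ t := fun t => by
    rw [cdf_eq_real, measureReal_def, hμ₂Iic t, ENNReal.toReal_ofReal (hKnn t)]
  have hHtop : Tendsto H atTop (𝓝 1) :=
    (tendsto_cdf_atTop μ₁).congr fun t => (hHcdf t).symm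
  have hHbot : Tendsto H atBot (𝓝 0) :=
    (tendsto_cdf_atBot μ₁).congr fun t => (hHcdf t).symm
  have hKtop : Tendsto K atTop (𝓝 1) :=
    (tendsto_cdf_atTop μ₂).congr fun t => (hKcdf t).symm
  have hHcont : Continuous H := hFc.rpow_const fun x => Or.inr hα₁.le
  have hKcont : Continuous K := hFc.rpow_const fun x => Or.inr hα₂.le
  have hrel : ∀ t, K t = H t ^ (α₂ / α₁) :=
    aux_pow_rel F hFc α₁ α₂ hα₁ hα₂ hHmono hHnn hKnn hKmono hHtop hKtop
  -- reduce to an integral against μ₁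
  have hmap : Measure.map (fun ω => (X₁ ω, X₂ ω)) ℙ = μ₁.prod μ₂ :=
    (indepFun_iff_map_prod_eq_prod_map_map hX₁.aemeasurable hX₂.aemeasurable).mp hindep
  have hlt : MeasurableSet {p : ℝ × ℝ | p.2 < p.1} :=
    measurableSet_lt measurable_snd measurable_fst
  have key : ℙ {ω | X₂ ω < X₁ ω} = ∫⁻ x, ENNReal.ofReal (H x ^ (α₂ / α₁)) ∂μ₁ := by
    have h1 : ℙ {ω | X₂ ω < X₁ ω}
        = Measure.map (fun ω => (X₁ ω, X₂ ω)) ℙ {p : ℝ × ℝ | p.2 < p.1} := by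
      rw [Measure.map_apply (hX₁.prodMk hX₂) hlt]
      rfl
    rw [h1, hmap, Measure.prod_apply hlt]
    refine lintegral_congr fun x => ?_
    have h2 : (Prod.mk x ⁻¹' {p : ℝ × ℝ | p.2 < p.1}) = Iio x := rfl
    rw [h2, aux_Iio μ₂ K hμ₂Iic hKcont x, hrel x]
  -- change of variables via the uniform distribution
  have hmapH : Measure.map H μ₁ = volume.restrict (Ioc 0 1) :=
    aux_map_uniform μ₁ H hμ₁Iic hHcont hHmono hHnn hHle1 hHbot hHtop
  set β := α₂ / α₁ with hβdef
  have hβ : 0 < β := div_pos hα₂ hα₁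
  have hg : Measurable fun u : ℝ => ENNReal.ofReal (u ^ β) :=
    ENNReal.measurable_ofReal.comp (Real.continuous_rpow_const hβ.le).measurable
  have key2 : ∫⁻ x, ENNReal.ofReal (H x ^ β) ∂μ₁
      = ∫⁻ u in Ioc (0:ℝ) 1, ENNReal.ofReal (u ^ β) := by
    rw [← hmapH, lintegral_map hg hHmono.measurable]
  have hint : IntegrableOn (fun u : ℝ => u ^ β) (Ioc 0 1) :=
    (Real.continuous_rpow_const hβ.le).integrableOn_Ioc
  have hae : 0 ≤ᵐ[volume.restrict (Ioc (0:ℝ) 1)] fun u : ℝ => u ^ β :=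
    (ae_restrict_iff' measurableSet_Ioc).mpr
      (Eventually.of_forall fun u hu => Real.rpow_nonneg hu.1.le β)
  have key3 : ∫⁻ u in Ioc (0:ℝ) 1, ENNReal.ofReal (u ^ β)
      = ENNReal.ofReal (α₁ / (α₁ + α₂)) := by
    rw [← ofReal_integral_eq_lintegral_ofReal hint hae]
    congr 1
    have hsum : β + 1 = (α₁ + α₂) / α₁ := by
      rw [hβdef]
      field_simp
      ring
    rw [← intervalIntegral.integral_of_le zero_le_one,
      integral_rpow (Or.inl (by linarith : (-1:ℝ) < β)),
      Real.one_rpow, Real.zero_rpow (by positivity), sub_zero, hsum, one_div_div]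
  rw [key, key2, key3, ENNReal.toReal_ofReal (by positivity)]
end

section
/- Suppose {F_α : α > 0} is a max-compatible family of continuous CDFs with multiplicative noise, i.e., X_α ~ f(α) · G in distribution for some function f : (0,∞) → ℝ \ {0} and some random variable G with continuous CDF. Then either G > 0 almost surely or G < 0 almost surely; i.e., min(P(G>0), P(G<0)) = 0. -/
open MeasureTheory ProbabilityTheory

lemma pi_inter_eval {ι : Type*} [Fintype ι] {Ω : Type*} [MeasurableSpace Ω]
    (μ : Measure Ω) [IsProbabilityMeasure μ] (S : Finset ι) (A : ι → Set Ω) :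
    Measure.pi (fun _ : ι => μ) (⋂ i ∈ S, Function.eval i ⁻¹' A i) = ∏ i ∈ S, μ (A i) := by
  classical
  have hset : (⋂ i ∈ S, Function.eval i ⁻¹' A i)
      = Set.pi Set.univ (fun i => if i ∈ S then A i else Set.univ) := by
    ext x
    simp only [Set.mem_iInter, Set.mem_preimage, Set.mem_pi, Set.mem_univ, true_imp_iff]
    constructor
    · intro h i
      by_cases hi : i ∈ S
      · simpa [hi] using h i hi
      · simp [hi]
    · intro h i hi
      simpa [hi] using h i
  rw [hset, Measure.pi_pi]
  have : ∀ i : ι, μ (if i ∈ S then A i else Set.univ) = if i ∈ S then μ (A i) else 1 := by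
    intro i; by_cases hi : i ∈ S <;> simp [hi]
  rw [Finset.prod_congr rfl fun i _ => this i, Finset.prod_ite_mem, Finset.univ_inter]

/-- In a max-compatible family with multiplicative noise `X α ~ f(α) · G`, the
noise `G` must be either a.s. positive or a.s. negative:
`min (P(G > 0), P(G < 0)) = 0`. -/
theorem multiplicative_noise_sign
    (F : ℝ → ℝ → ℝ)
    (hcont : ∀ α : ℝ, 0 < α → Continuous (F α))
    (hmax : MaxCompatible F)
    (f : ℝ → ℝ) (hf : ∀ α : ℝ, 0 < α → f α ≠ 0)
    {Ω : Type} [MeasureSpace Ω] [IsProbabilityMeasure (ℙ : Measure Ω)]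
    (G : Ω → ℝ) (hG : Measurable G)
    (hGcont : Continuous fun t => ((ℙ : Measure Ω) {ω | G ω ≤ t}).toReal)
    (hnoise : ∀ α : ℝ, 0 < α → ∀ t,
      ((ℙ : Measure Ω) {ω | f α * G ω ≤ t}).toReal = F α t) :
    min ((ℙ : Measure Ω) {ω | 0 < G ω}).toReal
        ((ℙ : Measure Ω) {ω | G ω < 0}).toReal = 0 := by
  set p := ((ℙ : Measure Ω) {ω | 0 < G ω}).toReal with hp
  set q := ((ℙ : Measure Ω) {ω | G ω < 0}).toReal with hq
  by_contra hne
  set m := min p q with hmdef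
  have hm0 : 0 ≤ m := le_min ENNReal.toReal_nonneg ENNReal.toReal_nonneg
  have hm : 0 < m := lt_of_le_of_ne hm0 (Ne.symm hne)
  -- the two parameters
  set α : Fin 2 → ℝ := ![m ^ 2, 1] with hα
  have hαpos : ∀ i, 0 < α i := by
    intro i; fin_cases i <;> simp [hα] <;> positivity
  have hα0 : α ⟨0, by omega⟩ = m ^ 2 := rfl
  have hα1 : α 1 = 1 := rfl
  -- the product space
  haveI : IsProbabilityMeasure (ℙ : Measure (Fin 2 → Ω)) := by
    rw [volume_pi]; infer_instance
  have hvol : (ℙ : Measure (Fin 2 → Ω)) = Measure.pi fun _ => (ℙ : Measure Ω) := volume_pi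
  set X : Fin 2 → (Fin 2 → Ω) → ℝ := fun i ω => f (α i) * G (ω i) with hX
  have hXmeas : ∀ i, Measurable (X i) :=
    fun i => measurable_const.mul (hG.comp (measurable_pi_apply i))
  have hmarg : ∀ (i : Fin 2) (B : Set Ω),
      (ℙ : Measure (Fin 2 → Ω)) (Function.eval i ⁻¹' B) = (ℙ : Measure Ω) B := by
    intro i B
    have h := pi_inter_eval (ℙ : Measure Ω) {i} (fun _ => B)
    rw [hvol]
    simpa using h
  have hXpre : ∀ (i : Fin 2) (s : Set ℝ),
      X i ⁻¹' s = Function.eval i ⁻¹' ((fun x => f (α i) * G x) ⁻¹' s) := fun _ _ => rfl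
  have hindep : iIndepFun X (ℙ : Measure (Fin 2 → Ω)) := by
    rw [iIndepFun_iff_measure_inter_preimage_eq_mul]
    intro S sets _
    simp only [hXpre]
    rw [hvol, pi_inter_eval]
    refine Finset.prod_congr rfl fun i _ => ?_
    rw [← hvol, hmarg i]
  have hcdf : ∀ i t, ((ℙ : Measure (Fin 2 → Ω)) {ω | X i ω ≤ t}).toReal = F (α i) t := by
    intro i t
    have hs : {ω : Fin 2 → Ω | X i ω ≤ t}
        = Function.eval i ⁻¹' {x | f (α i) * G x ≤ t} := rfl
    rw [hs, hmarg i, hnoise (α i) (hαpos i) t]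
  have hP := hmax 2 (le_refl 2) α hαpos (Fin 2 → Ω) X hXmeas hindep hcdf
  -- the lower bound event
  set A : Set Ω := {x | 0 < f (α ⟨0, by omega⟩) * G x} with hA
  set B : Set Ω := {x | f (α 1) * G x < 0} with hB
  have hsub : (Function.eval (0 : Fin 2) ⁻¹' A ∩ Function.eval (1 : Fin 2) ⁻¹' B)
      ⊆ {ω : Fin 2 → Ω | ∀ j, j ≠ (⟨0, by omega⟩ : Fin 2) →
          X j ω < X (⟨0, by omega⟩ : Fin 2) ω} := by
    rintro ω ⟨h0, h1⟩ j hj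
    have hj1 : j = 1 := by
      fin_cases j
      · exact absurd rfl hj
      · rfl
    subst hj1
    have hx0 : 0 < X (⟨0, by omega⟩ : Fin 2) ω := h0
    have hx1 : X 1 ω < 0 := h1
    linarith
  have hinterval : ((ℙ : Measure (Fin 2 → Ω))
      (Function.eval (0 : Fin 2) ⁻¹' A ∩ Function.eval (1 : Fin 2) ⁻¹' B))
      = (ℙ : Measure Ω) A * (ℙ : Measure Ω) B := by
    have hseteq : (Function.eval (0 : Fin 2) ⁻¹' A ∩ Function.eval (1 : Fin 2) ⁻¹' B)
        = ⋂ i ∈ (Finset.univ : Finset (Fin 2)), Function.eval i ⁻¹' (![A, B] i) := by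
      ext ω
      constructor
      · rintro ⟨h0, h1⟩
        refine Set.mem_iInter₂.2 ?_
        intro i _
        fin_cases i
        · exact h0
        · exact h1
      · intro h
        have h' := Set.mem_iInter₂.1 h
        exact ⟨h' 0 (Finset.mem_univ _), h' 1 (Finset.mem_univ _)⟩
    rw [hseteq, hvol, pi_inter_eval]
    simp [Fin.prod_univ_two]
  -- bounds on the factors
  have hAval : m ≤ ((ℙ : Measure Ω) A).toReal := by
    rcases (hf _ (hαpos ⟨0, by omega⟩)).lt_or_gt with hneg | hpos
    · have : A = {x | G x < 0} := by
        ext x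
        simp only [hA, Set.mem_setOf_eq, mul_pos_iff]
        constructor
        · rintro (⟨h1, _⟩ | ⟨_, h2⟩)
          · exact absurd h1 (not_lt.2 hneg.le)
          · exact h2
        · intro h; exact Or.inr ⟨hneg, h⟩
      rw [this]; exact min_le_right p q
    · have : A = {x | 0 < G x} := by
        ext x
        simp only [hA, Set.mem_setOf_eq, mul_pos_iff]
        constructor
        · rintro (⟨_, h2⟩ | ⟨h1, _⟩)
          · exact h2
          · exact absurd h1 (not_lt.2 hpos.le)
        · intro h; exact Or.inl ⟨hpos, h⟩
      rw [this]; exact min_le_left p q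
  have hBval : m ≤ ((ℙ : Measure Ω) B).toReal := by
    rcases (hf _ (hαpos 1)).lt_or_gt with hneg | hpos
    · have : B = {x | 0 < G x} := by
        ext x
        simp only [hB, Set.mem_setOf_eq, mul_neg_iff]
        constructor
        · rintro (⟨h1, _⟩ | ⟨_, h2⟩)
          · exact absurd h1 (not_lt.2 hneg.le)
          · exact h2
        · intro h; exact Or.inr ⟨hneg, h⟩
      rw [this]; exact min_le_left p q
    · have : B = {x | G x < 0} := by
        ext x
        simp only [hB, Set.mem_setOf_eq, mul_neg_iff]
        constructor
        · rintro (⟨_, h2⟩ | ⟨h1, _⟩)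
          · exact h2
          · exact absurd h1 (not_lt.2 hpos.le)
        · intro h; exact Or.inl ⟨hpos, h⟩
      rw [this]; exact min_le_right p q
  -- combine
  have hmm : m * m ≤ ((ℙ : Measure (Fin 2 → Ω))
      (Function.eval (0 : Fin 2) ⁻¹' A ∩ Function.eval (1 : Fin 2) ⁻¹' B)).toReal := by
    rw [hinterval, ENNReal.toReal_mul]
    exact mul_le_mul hAval hBval hm0 ENNReal.toReal_nonneg
  have hup : ((ℙ : Measure (Fin 2 → Ω))
      (Function.eval (0 : Fin 2) ⁻¹' A ∩ Function.eval (1 : Fin 2) ⁻¹' B)).toReal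
      ≤ m ^ 2 / (m ^ 2 + 1) := by
    have := ENNReal.toReal_mono (measure_ne_top (ℙ : Measure (Fin 2 → Ω)) _) (measure_mono hsub)
    rw [hP] at this
    have hsum : ∑ i, α i = m ^ 2 + 1 := by
      rw [Fin.sum_univ_two]; simp [hα]
    rw [hα0] at this
    rw [hsum] at this
    exact this
  have hfin : m * m ≤ m ^ 2 / (m ^ 2 + 1) := le_trans hmm hup
  have hpos1 : (0 : ℝ) < m ^ 2 + 1 := by positivity
  rw [le_div_iff₀ hpos1] at hfin
  nlinarith [mul_pos hm hm, mul_pos (mul_pos hm hm) (mul_pos hm hm)]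
end
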